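/- arXiv:2008.01368 — 4 statements merged into one kernel-verified Lean document; each statement's English description precedes it below -/
import Mathlib

section
/- For every integer x ≥ 2, we have P(x) ≤ x/2. -/
open scoped Classical

/-- The largest element of ℙ*₁ = ℙ* ∪ {1} (prime-powers together with 1) not exceeding `x`. -/
noncomputable def q (x : ℕ) : ℕ :=
  sSup {m : ℕ | (IsPrimePow m ∨ m = 1) ∧ m ≤ x}

/-- The prime-power map. -/
noncomputable def P (x : ℕ) : ℕ :=
  if x = 1 then 1
  else if IsPrimePow x then x / x.minFac
  else x - q x

/-- The orbit of `x` under `P`: `orbit x 1 = x` and `orbit x (n+1) = P (orbit x n)`. -/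
noncomputable def orbit (x n : ℕ) : ℕ := P^[n - 1] x

/-- The transient length `T x = min {n ≥ 1 : x_n = 1}`. -/
noncomputable def T (x : ℕ) : ℕ := sInf {n : ℕ | 1 ≤ n ∧ orbit x n = 1}

/-- The settling time `S x = min {n ≥ 1 : x_n ∈ ℙ*₁}`. -/
noncomputable def S (x : ℕ) : ℕ :=
  sInf {n : ℕ | 1 ≤ n ∧ (IsPrimePow (orbit x n) ∨ orbit x n = 1)}

theorem stmt_0 (x : ℕ) (hx : 2 ≤ x) : (P x : ℝ) ≤ (x : ℝ) / 2 := by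
  have hx1 : x ≠ 1 := by omega
  unfold P
  rw [if_neg hx1]
  by_cases hpp : IsPrimePow x
  · rw [if_pos hpp]
    have h2 : 2 ≤ x.minFac := by
      have h0 := Nat.minFac_pos x
      have h1 : x.minFac ≠ 1 := Nat.minFac_eq_one_iff.not.mpr hx1
      omega
    have : x / x.minFac ≤ x / 2 := Nat.div_le_div_left h2 (by norm_num)
    calc ((x / x.minFac : ℕ) : ℝ) ≤ ((x / 2 : ℕ) : ℝ) := by exact_mod_cast this
      _ ≤ (x : ℝ) / 2 := by
          have := Nat.cast_div_le (α := ℝ) (m := x) (n := 2)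
          simpa using this
  · rw [if_neg hpp]
    -- Bertrand: prime p with x/2 < p ≤ x
    obtain ⟨p, hp, hlt, hle⟩ := Nat.exists_prime_lt_and_le_two_mul (x / 2) (by omega)
    have hple : p ≤ x := le_trans hle (by omega)
    have hbdd : BddAbove {m : ℕ | (IsPrimePow m ∨ m = 1) ∧ m ≤ x} :=
      ⟨x, fun m hm => hm.2⟩
    have hqge : p ≤ q x := le_csSup hbdd ⟨Or.inl hp.isPrimePow, hple⟩
    have hqle : q x ≤ x := csSup_le ⟨1, Or.inr rfl, by omega⟩ (fun m hm => hm.2)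
    rw [Nat.cast_sub hqle]
    have hp2 : (x : ℝ) / 2 ≤ (p : ℝ) := by
      have : x / 2 < p := hlt
      have h2 : (x : ℝ) / 2 < ((x / 2 : ℕ) : ℝ) + 1 := by
        have hn : x < 2 * (x / 2) + 2 := by omega
        have : (x : ℝ) < 2 * ((x / 2 : ℕ) : ℝ) + 2 := by exact_mod_cast hn
        linarith
      have : ((x / 2 : ℕ) : ℝ) + 1 ≤ (p : ℝ) := by exact_mod_cast hlt
      linarith
    have : (p : ℝ) ≤ (q x : ℝ) := by exact_mod_cast hqge
    linarith
end

section
/- For every positive integer x, T(x) ≤ log₂ x + 1 (where log₂ is the real base-2 logarithm), with equality if and only if x is a power of 2 (i.e., x = 2^k for some integer k ≥ 0). -/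
open scoped Classical

lemma q_spec (x : ℕ) (hx : 1 ≤ x) : (IsPrimePow (q x) ∨ q x = 1) ∧ q x ≤ x := by
  have hne : {m : ℕ | (IsPrimePow m ∨ m = 1) ∧ m ≤ x}.Nonempty := ⟨1, Or.inr rfl, hx⟩
  have hbdd : BddAbove {m : ℕ | (IsPrimePow m ∨ m = 1) ∧ m ≤ x} :=
    ⟨x, fun _ hm => hm.2⟩
  exact Nat.sSup_mem hne hbdd

lemma le_q {m x : ℕ} (hm : IsPrimePow m ∨ m = 1) (hmx : m ≤ x) : m ≤ q x :=
  le_csSup ⟨x, fun _ hm' => hm'.2⟩ ⟨hm, hmx⟩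

lemma lt_two_mul_q {x : ℕ} (hx : 2 ≤ x) : x < 2 * q x := by
  obtain ⟨p, hp, hlt, hle⟩ := Nat.exists_prime_lt_and_le_two_mul (x / 2)
    (by omega)
  have h1 : p ≤ x := le_trans hle (by omega)
  have h2 : p ≤ q x := le_q (Or.inl hp.isPrimePow) h1
  have h3 : x / 2 < p := hlt
  omega

lemma P_bounds {x : ℕ} (hx : 2 ≤ x) :
    1 ≤ P x ∧ 2 * P x ≤ x ∧ ((¬ ∃ k, x = 2 ^ k) → 2 * P x < x) := by
  have hx1 : x ≠ 1 := by omega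
  by_cases hpp : IsPrimePow x
  · obtain ⟨p, k, hp, hk, hxe⟩ := hpp
    have hpn : Nat.Prime p := Nat.prime_iff.mpr hp
    have hmf : x.minFac = p := by rw [← hxe]; exact hpn.pow_minFac (by omega)
    have hdiv : x / x.minFac = p ^ (k - 1) := by
      rw [hmf, ← hxe]
      have : p ^ k = p ^ (k - 1) * p := by
        rw [← pow_succ]; congr 1; omega
      rw [this, Nat.mul_div_cancel _ hpn.pos]
    have hP : P x = p ^ (k - 1) := by
      rw [P, if_neg hx1, if_pos ⟨p, k, hp, hk, hxe⟩, hdiv]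
    have hp2 : 2 ≤ p := hpn.two_le
    have hpos : 1 ≤ p ^ (k - 1) := Nat.one_le_pow _ _ hpn.pos
    have hxval : x = p ^ (k - 1) * p := by
      rw [← pow_succ, ← hxe]; congr 1; omega
    refine ⟨by omega, ?_, ?_⟩
    · rw [hP]; nlinarith [hxval]
    · intro hnot
      have hpne2 : p ≠ 2 := by
        rintro rfl; exact hnot ⟨k, hxe.symm⟩
      have hp3 : 3 ≤ p := by omega
      rw [hP, hxval]; nlinarith
  · have hq := q_spec x (by omega)
    have hqlt : q x < x := by
      rcases lt_or_eq_of_le hq.2 with h | h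
      · exact h
      · exfalso; rcases hq.1 with h1 | h1
        · exact hpp (h ▸ h1)
        · omega
    have h2q := lt_two_mul_q hx
    have hP : P x = x - q x := by rw [P, if_neg hx1, if_neg hpp]
    refine ⟨by omega, by omega, fun _ => by omega⟩

lemma P_lt {x : ℕ} (hx : 2 ≤ x) : P x < x := by
  have h := (P_bounds hx).2.1; omega

lemma reach (x : ℕ) (hx : 1 ≤ x) : ∃ n, 1 ≤ n ∧ orbit x n = 1 := by
  induction x using Nat.strong_induction_on with
  | _ x ih =>
    rcases eq_or_lt_of_le hx with h | h
    · exact ⟨1, le_refl 1, by simp [orbit, ← h]⟩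
    · have hx2 : 2 ≤ x := h
      obtain ⟨n, hn1, hn2⟩ := ih (P x) (P_lt hx2) (P_bounds hx2).1
      refine ⟨n + 1, by omega, ?_⟩
      have : orbit x (n + 1) = orbit (P x) n := by
        simp only [orbit, Nat.add_sub_cancel]
        conv_lhs => rw [show n = (n - 1) + 1 by omega]
        rw [Function.iterate_succ_apply]
      rw [this, hn2]

lemma T_spec (x : ℕ) (hx : 1 ≤ x) : 1 ≤ T x ∧ orbit x (T x) = 1 :=
  Nat.sInf_mem (reach x hx)

lemma T_one : T 1 = 1 := by
  apply le_antisymm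
  · exact Nat.sInf_le ⟨le_refl 1, by simp [orbit]⟩
  · exact (T_spec 1 le_rfl).1

lemma orbit_shift (x n : ℕ) (hn : 1 ≤ n) : orbit x (n + 1) = orbit (P x) n := by
  simp only [orbit, Nat.add_sub_cancel]
  conv_lhs => rw [show n = (n - 1) + 1 by omega]
  rw [Function.iterate_succ_apply]

lemma T_rec {x : ℕ} (hx : 2 ≤ x) : T x = T (P x) + 1 := by
  have hP1 : 1 ≤ P x := (P_bounds hx).1
  have hTP := T_spec (P x) hP1
  have hT := T_spec x (by omega)
  have hub : T x ≤ T (P x) + 1 := by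
    apply Nat.sInf_le
    exact ⟨by omega, by rw [orbit_shift x _ hTP.1, hTP.2]⟩
  have hT2 : 2 ≤ T x := by
    rcases eq_or_lt_of_le hT.1 with h | h
    · exfalso
      have : orbit x 1 = x := by simp [orbit]
      rw [← h] at hT
      omega
    · omega
  have hlb : T (P x) ≤ T x - 1 := by
    apply Nat.sInf_le
    refine ⟨by omega, ?_⟩
    have := orbit_shift x (T x - 1) (by omega)
    rw [show T x - 1 + 1 = T x by omega] at this
    rw [← this, hT.2]
  omega

lemma T_two_pow (k : ℕ) : T (2 ^ k) = k + 1 := by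
  induction k with
  | zero => simpa using T_one
  | succ k ih =>
    have hx2 : 2 ≤ 2 ^ (k + 1) := by
      have : 2 ^ 1 ≤ 2 ^ (k+1) := Nat.pow_le_pow_right (by norm_num) (by omega)
      simpa using this
    have hpp : IsPrimePow (2 ^ (k + 1)) :=
      ⟨2, k + 1, Nat.prime_iff.mp Nat.prime_two, by omega, rfl⟩
    have hP : P (2 ^ (k + 1)) = 2 ^ k := by
      rw [P, if_neg (by omega), if_pos hpp,
        Nat.Prime.pow_minFac Nat.prime_two (by omega), pow_succ,
        Nat.mul_div_cancel _ (by norm_num)]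
    rw [T_rec hx2, hP, ih]

lemma T_bound (x : ℕ) (hx : 1 ≤ x) :
    2 ^ (T x - 1) ≤ x ∧ ((¬ ∃ k, x = 2 ^ k) → 2 ^ (T x - 1) < x) := by
  induction x using Nat.strong_induction_on with
  | _ x ih =>
    rcases eq_or_lt_of_le hx with h | h
    · refine ⟨by rw [← h, T_one]; simp, fun hn => absurd ⟨0, by omega⟩ hn⟩
    · have hx2 : 2 ≤ x := h
      have hP1 : 1 ≤ P x := (P_bounds hx2).1
      have hPle := (P_bounds hx2).2.1
      have ihP := (ih (P x) (P_lt hx2) hP1).1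
      have hTrec := T_rec hx2
      have hT1 : 1 ≤ T (P x) := (T_spec (P x) hP1).1
      have hexp : T x - 1 = (T (P x) - 1) + 1 := by omega
      have hkey : 2 ^ (T x - 1) ≤ 2 * P x := by
        rw [hexp, pow_succ]
        calc 2 ^ (T (P x) - 1) * 2 ≤ P x * 2 := by
              exact Nat.mul_le_mul_right 2 ihP
          _ = 2 * P x := by ring
      exact ⟨le_trans hkey hPle,
        fun hn => lt_of_le_of_lt hkey ((P_bounds hx2).2.2 hn)⟩

theorem stmt_1 (x : ℕ) (hx : 1 ≤ x) :
    (T x : ℝ) ≤ Real.logb 2 x + 1 ∧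
    ((T x : ℝ) = Real.logb 2 x + 1 ↔ ∃ k : ℕ, x = 2 ^ k) := by
  have hb := T_bound x hx
  have hT1 : 1 ≤ T x := (T_spec x hx).1
  have hx0 : (0:ℝ) < (x:ℝ) := by exact_mod_cast hx
  have hcast : ((T x - 1 : ℕ) : ℝ) = (T x : ℝ) - 1 := by
    rw [Nat.cast_sub hT1]; norm_num
  have hle : ((T x - 1 : ℕ) : ℝ) ≤ Real.logb 2 x := by
    rw [Real.le_logb_iff_rpow_le (by norm_num) hx0, Real.rpow_natCast]
    exact_mod_cast hb.1
  refine ⟨by linarith, ?_, ?_⟩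
  · intro heq
    by_contra hn
    have hstrict := hb.2 hn
    have hlt : ((T x - 1 : ℕ) : ℝ) < Real.logb 2 x := by
      rw [Real.lt_logb_iff_rpow_lt (by norm_num) hx0, Real.rpow_natCast]
      exact_mod_cast hstrict
    linarith
  · rintro ⟨k, rfl⟩
    rw [T_two_pow]
    have hlogb : Real.logb 2 ((2 ^ k : ℕ) : ℝ) = k := by
      push_cast
      rw [show ((2:ℝ)^k) = (2:ℝ)^(k:ℝ) from (Real.rpow_natCast 2 k).symm,
        Real.logb_rpow (by norm_num) (by norm_num)]
    rw [hlogb]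
    push_cast
    ring
end

section
/- For every integer x ≥ 2 that is not prime, x and x − p(x) are coprime, where p(x) denotes the largest element of ℙ ∪ {0,1} not exceeding x. -/
/-- The largest element of ℙ ∪ {0,1} not exceeding `x` (Pillai's function `p(x)`). -/
noncomputable def pPillai (x : ℕ) : ℕ :=
  sSup {m : ℕ | (m.Prime ∨ m = 0 ∨ m = 1) ∧ m ≤ x}

theorem stmt_9 (x : ℕ) (hx : 2 ≤ x) (hnp : ¬ x.Prime) :
    Nat.Coprime x (x - pPillai x) := by
  set S := {m : ℕ | (m.Prime ∨ m = 0 ∨ m = 1) ∧ m ≤ x} with hS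
  have h2S : 2 ∈ S := ⟨Or.inl Nat.prime_two, hx⟩
  have hbdd : BddAbove S := ⟨x, fun m hm => hm.2⟩
  have hmem : sSup S ∈ S := Nat.sSup_mem ⟨2, h2S⟩ hbdd
  have h2p : 2 ≤ sSup S := le_csSup hbdd h2S
  set p := sSup S with hp
  have hprime : p.Prime := by
    rcases hmem.1 with h | h | h
    · exact h
    · omega
    · omega
  have hpx : p ≤ x := hmem.2
  -- p does not divide x
  have hndvd : ¬ p ∣ x := by
    intro hdvd
    have hne : x ≠ p := fun h => hnp (h ▸ hprime)
    have hlt : p < x := lt_of_le_of_ne hpx (Ne.symm hne)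
    have h2px : 2 * p ≤ x := by
      obtain ⟨k, hk⟩ := hdvd
      have hk2 : 2 ≤ k := by
        by_contra hk2
        interval_cases k <;> omega
      calc 2 * p = p * 2 := by ring
        _ ≤ p * k := Nat.mul_le_mul_left p hk2
        _ = x := hk.symm
    obtain ⟨q, hq, hpq, hq2p⟩ := Nat.exists_prime_lt_and_le_two_mul p hprime.ne_zero
    have hqS : q ∈ S := ⟨Or.inl hq, le_trans hq2p h2px⟩
    have : q ≤ p := le_csSup hbdd hqS
    omega
  -- gcd divides p
  have hg : Nat.gcd x (x - p) ∣ p := by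
    have h1 : Nat.gcd x (x - p) ∣ x := Nat.gcd_dvd_left _ _
    have h2 : Nat.gcd x (x - p) ∣ x - p := Nat.gcd_dvd_right _ _
    have := Nat.dvd_sub h1 h2
    rwa [Nat.sub_sub_self hpx] at this
  rcases (Nat.Prime.eq_one_or_self_of_dvd hprime _ hg) with h | h
  · exact h
  · exact absurd (h ▸ Nat.gcd_dvd_left x (x - p)) hndvd
end

section
/- Fix a prime p. For every positive integer x: T_p(x) = 𝒮*_p(x) + ν_p(x) if p ∣ x, and T_p(x) = 𝒮*_p(x) + 1 otherwise; L_p(x) = 1 if p ∣ x, and L_p(x) = x mod p otherwise; S_p(x) = 𝒮*_p(x) if p ∣ x, and S_p(x) = 𝒮*_p(x) + 1 otherwise; A_p(x) = p^{ν_p(x)} if p ∣ x, and A_p(x) = x mod p otherwise. -/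
open scoped Classical

open scoped Classical

/-- The map `P_p`: fixes `1, …, p−1`, divides powers of `p` by `p`, and otherwise
subtracts the largest power of `p` not exceeding the argument. -/
noncomputable def Pp (p x : ℕ) : ℕ :=
  if x ≤ p - 1 then x
  else if ∃ k : ℕ, x = p ^ k then x / p
  else x - sSup {m : ℕ | (∃ k : ℕ, m = p ^ k) ∧ m ≤ x}

/-- The orbit of `x` under `P_p`: `orbitp p x 1 = x`, `orbitp p x (n+1) = P_p (orbitp p x n)`. -/
noncomputable def orbitp (p x n : ℕ) : ℕ := (Pp p)^[n - 1] x

/-- The transient length `T_p x = min {n ≥ 1 : x_n ∈ {1,…,p−1}}`. -/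
noncomputable def Tp (p x : ℕ) : ℕ :=
  sInf {n : ℕ | 1 ≤ n ∧ 1 ≤ orbitp p x n ∧ orbitp p x n ≤ p - 1}

/-- The limit `L_p x = x_{T_p x}`. -/
noncomputable def Lp (p x : ℕ) : ℕ := orbitp p x (Tp p x)

/-- The settling time `S_p x = min {n ≥ 1 : x_n ∈ {1,…,p−1} ∪ {p^k : k ≥ 1}}`. -/
noncomputable def Sp (p x : ℕ) : ℕ :=
  sInf {n : ℕ | 1 ≤ n ∧
    ((1 ≤ orbitp p x n ∧ orbitp p x n ≤ p - 1) ∨ ∃ k : ℕ, 1 ≤ k ∧ orbitp p x n = p ^ k)}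

/-- The attractor `A_p x = x_{S_p x}`. -/
noncomputable def Ap (p x : ℕ) : ℕ := orbitp p x (Sp p x)

/-- `𝒮*_p(x)`: the sum of the base-`p` digits of `x` minus `x mod p`. -/
def Sstar (p x : ℕ) : ℕ := (Nat.digits p x).sum - x % p


open scoped Classical


lemma sSup_powers {p x : ℕ} (hp : 1 < p) (hx : 0 < x) :
    sSup {m : ℕ | (∃ k : ℕ, m = p ^ k) ∧ m ≤ x} = p ^ Nat.log p x := by
  refine IsGreatest.csSup_eq ⟨⟨⟨Nat.log p x, rfl⟩, Nat.pow_log_le_self p hx.ne'⟩, ?_⟩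
  rintro m ⟨⟨k, rfl⟩, hk⟩
  exact Nat.pow_le_pow_right (le_of_lt hp) ((Nat.le_log_iff_pow_le hp hx.ne').mpr hk)

lemma Pp_small {p x : ℕ} (h : x ≤ p - 1) : Pp p x = x := if_pos h

lemma Pp_pow {p x : ℕ} (h : ¬ x ≤ p - 1) (hk : ∃ k, x = p ^ k) : Pp p x = x / p := by
  rw [Pp, if_neg h, if_pos hk]

lemma Pp_sub {p x : ℕ} (hp : 1 < p) (hx : 0 < x) (h : ¬ x ≤ p - 1) (hk : ¬ ∃ k, x = p ^ k) :
    Pp p x = x - p ^ Nat.log p x := by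
  rw [Pp, if_neg h, if_neg hk, sSup_powers hp hx]

lemma orbitp_one (p x : ℕ) : orbitp p x 1 = x := rfl

lemma orbitp_succ (p x : ℕ) {n : ℕ} (hn : 1 ≤ n) :
    orbitp p x (n + 1) = orbitp p (Pp p x) n := by
  obtain ⟨m, rfl⟩ := Nat.exists_eq_add_of_le hn
  show (Pp p)^[1 + m + 1 - 1] x = (Pp p)^[1 + m - 1] (Pp p x)
  rw [show 1 + m + 1 - 1 = m + 1 by omega, show 1 + m - 1 = m by omega,
    Function.iterate_succ_apply]

lemma sInf_shift {Q R : ℕ → Prop} (h : ∀ n, 1 ≤ n → (Q (n + 1) ↔ R n)) (h1 : ¬ Q 1)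
    (hR : 0 < sInf {n : ℕ | 1 ≤ n ∧ R n}) :
    sInf {n : ℕ | 1 ≤ n ∧ Q n} = sInf {n : ℕ | 1 ≤ n ∧ R n} + 1 := by
  have hmem : sInf {n : ℕ | 1 ≤ n ∧ R n} ∈ {n : ℕ | 1 ≤ n ∧ R n} :=
    Nat.sInf_mem (Nat.nonempty_of_pos_sInf hR)
  have hQ : (sInf {n : ℕ | 1 ≤ n ∧ R n} + 1) ∈ {n : ℕ | 1 ≤ n ∧ Q n} :=
    ⟨Nat.le_add_left _ _, (h _ hmem.1).mpr hmem.2⟩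
  have hk : sInf {n : ℕ | 1 ≤ n ∧ Q n} ∈ {n : ℕ | 1 ≤ n ∧ Q n} := Nat.sInf_mem ⟨_, hQ⟩
  have hle : sInf {n : ℕ | 1 ≤ n ∧ Q n} ≤ sInf {n : ℕ | 1 ≤ n ∧ R n} + 1 := Nat.sInf_le hQ
  have hk2 : sInf {n : ℕ | 1 ≤ n ∧ Q n} ≠ 1 := fun he => h1 (he ▸ hk.2)
  obtain ⟨j, hj⟩ : ∃ j, sInf {n : ℕ | 1 ≤ n ∧ Q n} = j + 1 :=
    ⟨sInf {n : ℕ | 1 ≤ n ∧ Q n} - 1, by have := hk.1; omega⟩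
  have hj1 : 1 ≤ j := by have := hk.1; omega
  have hmj : sInf {n : ℕ | 1 ≤ n ∧ R n} ≤ j :=
    Nat.sInf_le ⟨hj1, (h j hj1).mp (hj ▸ hk.2)⟩
  omega

lemma digits_sum_pos {p : ℕ} (hp : 1 < p) : ∀ {n : ℕ}, 0 < n → 0 < (Nat.digits p n).sum := by
  intro n
  induction n using Nat.strong_induction_on with
  | _ n ih =>
    intro hn
    rw [Nat.digits_def' hp hn]
    simp only [List.sum_cons]
    rcases Nat.eq_zero_or_pos (n % p) with h | h
    · have hdvd : p ∣ n := Nat.dvd_of_mod_eq_zero h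
      have h2 : 0 < n / p := Nat.div_pos (Nat.le_of_dvd hn hdvd) (by omega)
      have := ih (n / p) (Nat.div_lt_self hn hp) h2
      omega
    · omega

lemma digits_sum_pow {p : ℕ} (hp : 1 < p) : ∀ k : ℕ, (Nat.digits p (p ^ k)).sum = 1 := by
  intro k
  induction k with
  | zero =>
    rw [pow_zero, Nat.digits_def' hp one_pos, Nat.mod_eq_of_lt hp, Nat.div_eq_of_lt hp]
    simp
  | succ k ih =>
    rw [Nat.digits_def' hp (pow_pos (by omega) _), List.sum_cons, pow_succ,
      Nat.mul_mod_left, Nat.mul_div_cancel _ (by omega : 0 < p)]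
    simpa using ih

lemma digits_sum_rec {p n : ℕ} (hp : 1 < p) (hn : 0 < n) :
    (Nat.digits p n).sum = n % p + (Nat.digits p (n / p)).sum := by
  rw [Nat.digits_def' hp hn, List.sum_cons]

lemma digits_sum_sub_pow {p : ℕ} (hp : 1 < p) :
    ∀ d x : ℕ, p ^ d ≤ x → x < p ^ (d + 1) →
      (Nat.digits p x).sum = (Nat.digits p (x - p ^ d)).sum + 1 := by
  intro d
  induction d with
  | zero =>
    intro x h1 h2
    rw [pow_zero] at h1 ⊢
    rw [pow_one] at h2
    rw [Nat.digits_def' hp (by omega), Nat.mod_eq_of_lt h2, Nat.div_eq_of_lt h2]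
    rcases Nat.eq_or_lt_of_le h1 with h | h
    · simp [← h]
    · rw [Nat.digits_def' hp (by omega : 0 < x - 1),
        Nat.mod_eq_of_lt (by omega : x - 1 < p), Nat.div_eq_of_lt (by omega : x - 1 < p)]
      simp; omega
  | succ d ih =>
    intro x h1 h2
    have hp0 : 0 < p := by omega
    have hx0 : 0 < x := lt_of_lt_of_le (pow_pos hp0 _) h1
    have hq1 : p ^ d ≤ x / p := by
      rw [Nat.le_div_iff_mul_le hp0]; rw [← pow_succ]; exact h1
    have hq2 : x / p < p ^ (d + 1) := by
      rw [Nat.div_lt_iff_lt_mul hp0]; rw [← pow_succ]; exact h2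
    have hsum : (Nat.digits p x).sum = x % p + (Nat.digits p (x / p)).sum :=
      by rw [Nat.digits_def' hp hx0, List.sum_cons]
    rcases Nat.eq_or_lt_of_le h1 with h | h
    · rw [← h]
      simp only [Nat.sub_self, Nat.digits_zero, List.sum_nil]
      rw [digits_sum_pow hp]
    · have hy0 : 0 < x - p ^ (d + 1) := by omega
      have hmod : (x - p ^ (d + 1)) % p = x % p := by
        rw [pow_succ']; exact Nat.sub_mul_mod (by rw [← pow_succ']; omega)
      have hdivv : (x - p ^ (d + 1)) / p = x / p - p ^ d := by
        rw [pow_succ']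
        rw [Nat.sub_mul_div x p (p ^ d)]
      rw [Nat.digits_def' hp hy0, List.sum_cons, hmod, hdivv, hsum, ih _ hq1 hq2]
      omega

lemma padicValNat_sub_pow_log {p x : ℕ} (hp : p.Prime) (hx : p ≤ x)
    (hnp : ¬ ∃ k, x = p ^ k) :
    padicValNat p (x - p ^ Nat.log p x) = padicValNat p x := by
  haveI := Fact.mk hp
  have hp2 := hp.two_le
  set d := Nat.log p x with hd
  have hle : p ^ d ≤ x := Nat.pow_log_le_self p (by omega : x ≠ 0)
  have hlt : x < p ^ (d + 1) := Nat.lt_pow_succ_log_self hp.one_lt x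
  have hne : x ≠ p ^ d := fun h => hnp ⟨d, h⟩
  have hy0 : 0 < x - p ^ d := by omega
  set v := padicValNat p x with hv
  have hvd : p ^ v ∣ x := pow_padicValNat_dvd
  have hvnd : ¬ p ^ (v + 1) ∣ x := pow_succ_padicValNat_not_dvd (by omega)
  have hvled : v ≤ d := by
    have : p ^ v ≤ x := Nat.le_of_dvd (by omega) hvd
    exact (Nat.le_log_iff_pow_le hp.one_lt (by omega : x ≠ 0)).mpr this
  have h1 : p ^ v ∣ x - p ^ d := Nat.dvd_sub hvd (pow_dvd_pow p hvled)
  have h2 : ¬ p ^ (v + 1) ∣ x - p ^ d := by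
    intro hdvd
    rcases Nat.lt_or_ge v d with hvlt | hvge
    · exact hvnd (by
        have : p ^ (v + 1) ∣ p ^ d := pow_dvd_pow p (by omega)
        have := Nat.dvd_add hdvd this
        rwa [Nat.sub_add_cancel hle] at this)
    · have hvd' : v = d := le_antisymm hvled hvge
      have : p ^ (v + 1) ≤ x - p ^ d := Nat.le_of_dvd hy0 hdvd
      rw [hvd'] at this
      omega
  have hy : x - p ^ d ≠ 0 := by omega
  have hA : v ≤ padicValNat p (x - p ^ d) := (padicValNat_dvd_iff_le hy).mp h1
  have hB : padicValNat p (x - p ^ d) < v + 1 := by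
    by_contra hc
    exact h2 ((padicValNat_dvd_iff_le hy).mpr (by omega))
  omega

lemma Tp_step {p x : ℕ} (h1 : ¬(1 ≤ x ∧ x ≤ p - 1)) (hpos : 0 < Tp p (Pp p x)) :
    Tp p x = Tp p (Pp p x) + 1 := by
  unfold Tp at *
  exact sInf_shift (fun n hn => by rw [orbitp_succ p x hn]) (by rw [orbitp_one]; exact h1) hpos

lemma Sp_step {p x : ℕ} (h1 : ¬((1 ≤ x ∧ x ≤ p - 1) ∨ ∃ k : ℕ, 1 ≤ k ∧ x = p ^ k))
    (hpos : 0 < Sp p (Pp p x)) : Sp p x = Sp p (Pp p x) + 1 := by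
  unfold Sp at *
  exact sInf_shift (fun n hn => by rw [orbitp_succ p x hn]) (by rw [orbitp_one]; exact h1) hpos

lemma Lp_step {p x : ℕ} (h1 : ¬(1 ≤ x ∧ x ≤ p - 1)) (hpos : 0 < Tp p (Pp p x)) :
    Lp p x = Lp p (Pp p x) := by
  rw [Lp, Lp, Tp_step h1 hpos, orbitp_succ p x hpos]

lemma Ap_step {p x : ℕ} (h1 : ¬((1 ≤ x ∧ x ≤ p - 1) ∨ ∃ k : ℕ, 1 ≤ k ∧ x = p ^ k))
    (hpos : 0 < Sp p (Pp p x)) : Ap p x = Ap p (Pp p x) := by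
  rw [Ap, Ap, Sp_step h1 hpos, orbitp_succ p x hpos]

lemma Sstar_pow {p : ℕ} (hp1 : 1 < p) (j : ℕ) :
    Sstar p (p ^ j) = if j = 0 then 0 else 1 := by
  rcases Nat.eq_zero_or_pos j with rfl | hj
  · have := digits_sum_pow hp1 0
    rw [pow_zero] at this ⊢
    rw [Sstar, this, Nat.mod_eq_of_lt hp1]
    simp
  · have hmod : p ^ j % p = 0 := by
      rw [show p ^ j = p ^ (j - 1) * p by rw [← pow_succ]; congr 1; omega, Nat.mul_mod_left]
    rw [Sstar, digits_sum_pow hp1, hmod, if_neg (by omega)]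

theorem stmt_18 (p : ℕ) (hp : p.Prime) (x : ℕ) (hx : 0 < x) :
    (Tp p x = if p ∣ x then Sstar p x + padicValNat p x else Sstar p x + 1) ∧
    (Lp p x = if p ∣ x then 1 else x % p) ∧
    (Sp p x = if p ∣ x then Sstar p x else Sstar p x + 1) ∧
    (Ap p x = if p ∣ x then p ^ padicValNat p x else x % p) := by
  haveI := Fact.mk hp
  have hp1 : 1 < p := hp.one_lt
  induction x using Nat.strong_induction_on with
  | _ x ih =>
  by_cases hsmall : x ≤ p - 1
  · -- Case A : 1 ≤ x ≤ p - 1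
    have hxp : x < p := by omega
    have hnd : ¬ p ∣ x := Nat.not_dvd_of_pos_of_lt hx hxp
    have h1mem : (1:ℕ) ∈ {n : ℕ | 1 ≤ n ∧ 1 ≤ orbitp p x n ∧ orbitp p x n ≤ p - 1} :=
      ⟨le_refl 1, by rw [orbitp_one]; exact ⟨hx, hsmall⟩⟩
    have hT : Tp p x = 1 := by
      unfold Tp
      exact le_antisymm (Nat.sInf_le h1mem) (Nat.sInf_mem ⟨1, h1mem⟩).1
    have h1mem' : (1:ℕ) ∈ {n : ℕ | 1 ≤ n ∧ ((1 ≤ orbitp p x n ∧ orbitp p x n ≤ p - 1) ∨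
        ∃ k : ℕ, 1 ≤ k ∧ orbitp p x n = p ^ k)} :=
      ⟨le_refl 1, Or.inl (by rw [orbitp_one]; exact ⟨hx, hsmall⟩)⟩
    have hS : Sp p x = 1 := by
      unfold Sp
      exact le_antisymm (Nat.sInf_le h1mem') (Nat.sInf_mem ⟨1, h1mem'⟩).1
    have hdig : (Nat.digits p x).sum = x := by
      rw [Nat.digits_def' hp1 hx, Nat.mod_eq_of_lt hxp, Nat.div_eq_of_lt hxp]
      simp
    have hSstar : Sstar p x = 0 := by
      rw [Sstar, hdig, Nat.mod_eq_of_lt hxp]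
      omega
    rw [if_neg hnd, if_neg hnd, if_neg hnd, if_neg hnd, hSstar]
    exact ⟨by rw [hT], by rw [Lp, hT, orbitp_one, Nat.mod_eq_of_lt hxp],
      by rw [hS], by rw [Ap, hS, orbitp_one, Nat.mod_eq_of_lt hxp]⟩
  · by_cases hpow : ∃ k : ℕ, x = p ^ k
    · -- Case B : x = p ^ k, k ≥ 1
      obtain ⟨k, rfl⟩ := hpow
      have hk1 : 1 ≤ k := by
        rcases Nat.eq_zero_or_pos k with rfl | h
        · rw [pow_zero] at hsmall; omega
        · exact h
      have hdvd : p ∣ p ^ k := dvd_pow_self p (by omega)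
      have hval : padicValNat p (p ^ k) = k := padicValNat.prime_pow k
      have hSstar : Sstar p (p ^ k) = 1 := by rw [Sstar_pow hp1, if_neg (by omega)]
      have hP : Pp p (p ^ k) = p ^ (k - 1) := by
        rw [Pp_pow hsmall ⟨k, rfl⟩,
          show p ^ k = p ^ (k - 1) * p by rw [← pow_succ]; congr 1; omega,
          Nat.mul_div_cancel _ (by omega : 0 < p)]
      have hylt : p ^ (k - 1) < p ^ k := Nat.pow_lt_pow_right hp1 (by omega)
      have ihy := ih _ hylt (pow_pos (by omega) _)
      have hTy : Tp p (p ^ (k - 1)) = k ∧ Lp p (p ^ (k - 1)) = 1 := by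
        rcases Nat.eq_zero_or_pos (k - 1) with he | hj
        · rw [he, pow_zero] at ihy ⊢
          have hnd1 : ¬ p ∣ 1 := hp.not_dvd_one
          have hS1 : Sstar p 1 = 0 := by
            have := Sstar_pow hp1 0
            rwa [pow_zero, if_pos rfl] at this
          rw [if_neg hnd1, if_neg hnd1] at ihy
          rw [ihy.1, ihy.2.1, hS1, Nat.mod_eq_of_lt hp1]
          exact ⟨by omega, rfl⟩
        · have hdy : p ∣ p ^ (k - 1) := dvd_pow_self p (by omega)
          have hSy : Sstar p (p ^ (k - 1)) = 1 := by rw [Sstar_pow hp1, if_neg (by omega)]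
          have hvy : padicValNat p (p ^ (k - 1)) = k - 1 := padicValNat.prime_pow _
          rw [if_pos hdy, if_pos hdy] at ihy
          rw [ihy.1, ihy.2.1, hSy, hvy]
          exact ⟨by omega, rfl⟩
      have hnQ1 : ¬(1 ≤ p ^ k ∧ p ^ k ≤ p - 1) := fun h => hsmall h.2
      have hTpos : 0 < Tp p (Pp p (p ^ k)) := by rw [hP, hTy.1]; omega
      have hT : Tp p (p ^ k) = k + 1 := by rw [Tp_step hnQ1 hTpos, hP, hTy.1]
      have hL : Lp p (p ^ k) = 1 := by rw [Lp_step hnQ1 hTpos, hP, hTy.2]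
      have h1mem' : (1:ℕ) ∈ {n : ℕ | 1 ≤ n ∧ ((1 ≤ orbitp p (p ^ k) n ∧
          orbitp p (p ^ k) n ≤ p - 1) ∨ ∃ j : ℕ, 1 ≤ j ∧ orbitp p (p ^ k) n = p ^ j)} :=
        ⟨le_refl 1, Or.inr ⟨k, hk1, orbitp_one p _⟩⟩
      have hS : Sp p (p ^ k) = 1 := by
        unfold Sp
        exact le_antisymm (Nat.sInf_le h1mem') (Nat.sInf_mem ⟨1, h1mem'⟩).1
      rw [if_pos hdvd, if_pos hdvd, if_pos hdvd, if_pos hdvd, hSstar, hval]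
      exact ⟨by rw [hT, Nat.add_comm], hL, hS, by rw [Ap, hS, orbitp_one]⟩
    · -- Case C
      have hxp : p ≤ x := by omega
      set d := Nat.log p x with hd
      have hd1 : 1 ≤ d := Nat.log_pos hp1 hxp
      have hle : p ^ d ≤ x := Nat.pow_log_le_self p (by omega)
      have hlt : x < p ^ (d + 1) := Nat.lt_pow_succ_log_self hp1 x
      have hne : x ≠ p ^ d := fun h => hpow ⟨d, h⟩
      have hpd0 : 0 < p ^ d := pow_pos (by omega) d
      have hy0 : 0 < x - p ^ d := by omega
      have hylt : x - p ^ d < x := by omega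
      have hP : Pp p x = x - p ^ d := Pp_sub hp1 hx hsmall hpow
      have hsum : (Nat.digits p x).sum = (Nat.digits p (x - p ^ d)).sum + 1 :=
        digits_sum_sub_pow hp1 d x hle hlt
      have hmod : (x - p ^ d) % p = x % p := by
        rw [show p ^ d = p * p ^ (d - 1) by rw [← pow_succ']; congr 1; omega]
        exact Nat.sub_mul_mod (by rw [← pow_succ', show d - 1 + 1 = d by omega]; exact hle)
      have hdvd_iff : (p ∣ x) ↔ (p ∣ (x - p ^ d)) := by
        rw [Nat.dvd_iff_mod_eq_zero, Nat.dvd_iff_mod_eq_zero, hmod]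
      have hval : padicValNat p (x - p ^ d) = padicValNat p x :=
        padicValNat_sub_pow_log hp hxp hpow
      have hqpos : 0 < (Nat.digits p (x / p)).sum :=
        digits_sum_pos hp1 (Nat.div_pos hxp (by omega))
      have hrec : (Nat.digits p x).sum = x % p + (Nat.digits p (x / p)).sum :=
        digits_sum_rec hp1 hx
      have hSx : Sstar p x = (Nat.digits p x).sum - x % p := rfl
      have hSy : Sstar p (x - p ^ d) = (Nat.digits p (x - p ^ d)).sum - (x - p ^ d) % p := rfl
      have hmodlt : x % p < p := Nat.mod_lt _ (by omega)
      have hSx1 : 1 ≤ Sstar p x := by omega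
      have hSrel : Sstar p (x - p ^ d) + 1 = Sstar p x := by omega
      have ihy := ih _ hylt hy0
      have hnQ1 : ¬(1 ≤ x ∧ x ≤ p - 1) := fun h => hsmall h.2
      have hnS1 : ¬((1 ≤ x ∧ x ≤ p - 1) ∨ ∃ k : ℕ, 1 ≤ k ∧ x = p ^ k) := by
        rintro (h | ⟨k, _, hk⟩)
        · exact hsmall h.2
        · exact hpow ⟨k, hk⟩
      by_cases hdx : p ∣ x
      · have hdy : p ∣ (x - p ^ d) := hdvd_iff.mp hdx
        rw [if_pos hdy, if_pos hdy, if_pos hdy, if_pos hdy] at ihy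
        have hy_mod : (x - p ^ d) % p = 0 := Nat.dvd_iff_mod_eq_zero.mp hdy
        have hSypos : 1 ≤ Sstar p (x - p ^ d) := by
          have := digits_sum_pos hp1 hy0
          omega
        have hTpos : 0 < Tp p (Pp p x) := by rw [hP, ihy.1]; omega
        have hSpos : 0 < Sp p (Pp p x) := by rw [hP, ihy.2.2.1]; omega
        rw [if_pos hdx, if_pos hdx, if_pos hdx, if_pos hdx]
        refine ⟨?_, ?_, ?_, ?_⟩
        · rw [Tp_step hnQ1 hTpos, hP, ihy.1]; omega
        · rw [Lp_step hnQ1 hTpos, hP, ihy.2.1]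
        · rw [Sp_step hnS1 hSpos, hP, ihy.2.2.1]; omega
        · rw [Ap_step hnS1 hSpos, hP, ihy.2.2.2, hval]
      · have hdy : ¬ p ∣ (x - p ^ d) := fun h => hdx (hdvd_iff.mpr h)
        rw [if_neg hdy, if_neg hdy, if_neg hdy, if_neg hdy] at ihy
        have hTpos : 0 < Tp p (Pp p x) := by rw [hP, ihy.1]; omega
        have hSpos : 0 < Sp p (Pp p x) := by rw [hP, ihy.2.2.1]; omega
        rw [if_neg hdx, if_neg hdx, if_neg hdx, if_neg hdx]
        refine ⟨?_, ?_, ?_, ?_⟩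
        · rw [Tp_step hnQ1 hTpos, hP, ihy.1]; omega
        · rw [Lp_step hnQ1 hTpos, hP, ihy.2.1, hmod]
        · rw [Sp_step hnS1 hSpos, hP, ihy.2.2.1]; omega
        · rw [Ap_step hnS1 hSpos, hP, ihy.2.2.2, hmod]
end
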